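/- Linear convergence of the energy-estimator quantity: suppose Δ_ℓ := (E(u⋆_ℓ) − E(u⋆)) + γ η_ℓ(u⋆_ℓ)², where E(u⋆_ℓ) − E(u⋆) ≤ (L/2)‖u⋆_ℓ − u⋆‖², ‖u⋆ − u⋆_ℓ‖ ≤ C⋆_rel η_ℓ(u⋆_ℓ), the estimator reduction η_{ℓ+1}(u⋆_{ℓ+1})² ≤ q_est η_ℓ(u⋆_ℓ)² + C_est‖u⋆_{ℓ+1} − u⋆_ℓ‖² holds with 0 < q_est < 1, the energy satisfies (α/2)‖u⋆_{ℓ+1} − u⋆_ℓ‖² ≤ E(u⋆_ℓ) − E(u⋆_{ℓ+1}), and γ := α/(2C_est). Then there exists 0 < q_lin < 1, depending only on α, L, C⋆_rel, q_est, γ, such that Δ_{ℓ+1} ≤ q_lin Δ_ℓ for all ℓ. -/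

import Mathlib

/-- Linear convergence of `Δ_ℓ = (E(u⋆_ℓ) - E(u⋆)) + γ η_ℓ²` with `γ = α/(2 C_est)`:
there exists `0 < q_lin < 1` with `Δ_{ℓ+1} ≤ q_lin Δ_ℓ` for all `ℓ`. -/
theorem linear_convergence_energy
    {H : Type*} [NormedAddCommGroup H] [InnerProductSpace ℝ H] [CompleteSpace H]
    (E : H → ℝ) (u : ℕ → H) (ustar : H) (η : ℕ → ℝ)
    (α L Cstar Cest qest : ℝ)
    (hα : 0 < α) (hL : 0 < L) (hCstar : 0 < Cstar) (hCest : 0 < Cest)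
    (hqest0 : 0 < qest) (hqest1 : qest < 1)
    (hηpos : ∀ ℓ, 0 ≤ η ℓ)
    (hmin : ∀ ℓ, 0 ≤ E (u ℓ) - E ustar)
    (hE : ∀ ℓ, E (u ℓ) - E ustar ≤ L / 2 * ‖u ℓ - ustar‖ ^ 2)
    (hrel : ∀ ℓ, ‖ustar - u ℓ‖ ≤ Cstar * η ℓ)
    (hred : ∀ ℓ, η (ℓ + 1) ^ 2 ≤ qest * η ℓ ^ 2 + Cest * ‖u (ℓ + 1) - u ℓ‖ ^ 2)
    (hdec : ∀ ℓ, α / 2 * ‖u (ℓ + 1) - u ℓ‖ ^ 2 ≤ E (u ℓ) - E (u (ℓ + 1))) :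
    ∃ qlin : ℝ, 0 < qlin ∧ qlin < 1 ∧
      ∀ ℓ, (E (u (ℓ + 1)) - E ustar) + α / (2 * Cest) * η (ℓ + 1) ^ 2 ≤
        qlin * ((E (u ℓ) - E ustar) + α / (2 * Cest) * η ℓ ^ 2) := by
  set γ : ℝ := α / (2 * Cest) with hγ
  have hγpos : 0 < γ := by positivity
  have hγC : γ * Cest = α / 2 := by rw [hγ, div_mul_eq_mul_div, div_eq_div_iff (by positivity) (by norm_num)]; ring
  set C0 : ℝ := L * Cstar ^ 2 * Cest / α with hC0
  have hC0pos : 0 < C0 := by positivity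
  have hC0γ : C0 * γ = L * Cstar ^ 2 / 2 := by
    rw [hC0, hγ, div_mul_div_comm, div_eq_div_iff (by positivity) (by norm_num)]; ring
  refine ⟨(qest + C0) / (1 + C0), by positivity, ?_, ?_⟩
  · rw [div_lt_one (by linarith)]
    linarith
  intro ℓ
  -- key bounds
  have hnorm : ‖u ℓ - ustar‖ = ‖ustar - u ℓ‖ := norm_sub_rev _ _
  have hd : E (u ℓ) - E ustar ≤ C0 * γ * η ℓ ^ 2 := by
    rw [hC0γ]
    have h1 := hE ℓ
    have h2 := hrel ℓ
    have h3 : ‖ustar - u ℓ‖ ^ 2 ≤ (Cstar * η ℓ) ^ 2 := by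
      apply sq_le_sq' <;> nlinarith [norm_nonneg (ustar - u ℓ)]
    rw [hnorm] at h1
    nlinarith
  have hstep : (E (u (ℓ + 1)) - E ustar) + γ * η (ℓ + 1) ^ 2 ≤
      (E (u ℓ) - E ustar) + γ * qest * η ℓ ^ 2 := by
    have h1 : γ * η (ℓ + 1) ^ 2 ≤ γ * (qest * η ℓ ^ 2) + γ * Cest * ‖u (ℓ + 1) - u ℓ‖ ^ 2 := by
      have := mul_le_mul_of_nonneg_left (hred ℓ) hγpos.le
      linarith [this]
    rw [hγC] at h1
    have h2 := hdec ℓ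
    nlinarith
  show (E (u (ℓ + 1)) - E ustar) + γ * η (ℓ + 1) ^ 2 ≤
      (qest + C0) / (1 + C0) * ((E (u ℓ) - E ustar) + γ * η ℓ ^ 2)
  rw [show (qest + C0) / (1 + C0) * ((E (u ℓ) - E ustar) + γ * η ℓ ^ 2) =
      (qest + C0) * ((E (u ℓ) - E ustar) + γ * η ℓ ^ 2) / (1 + C0) from by ring,
    le_div_iff₀ (by linarith : (0:ℝ) < 1 + C0)]
  have hη2 : 0 ≤ η ℓ ^ 2 := sq_nonneg _
  nlinarith [hstep, hd, mul_pos hγpos hC0pos]
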